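/- Let K be a bounded self-adjoint operator and R a bounded operator on a complex Hilbert space. Set W = (2 + iK)(2 − iK)^{−1}, L = 2i(2 − iK)^{−1}R, and define the Hudson–Parthasarathy coefficients 𝓛₁ = −L*W, 𝓛₂ = L, 𝓛₃ = W − I. Then 2 + 𝓛₃ = I + W is invertible and the symmetric-form coefficients are self-adjoint multiples of the original operators: 2𝓛₃(2 + 𝓛₃)^{−1} = iK, 2𝓛₁(2 + 𝓛₃)^{−1} = iR*, and 2(2 + 𝓛₃)^{−1}𝓛₂ = iR. -/
import Mathlib


open MeasureTheory Complex

lemma aux_isUnit {H : Type*} [NormedAddCommGroup H] [InnerProductSpace ℂ H] [CompleteSpace H]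
    (K : H →L[ℂ] H) (hK : IsSelfAdjoint K) :
    IsUnit ((2 : H →L[ℂ] H) - Complex.I • K) := by
  rw [show (2 : H →L[ℂ] H) = algebraMap ℂ _ 2 from (map_ofNat (algebraMap ℂ _) 2).symm,
    ← spectrum.notMem_iff]
  intro hmem
  rw [show Complex.I • K = (Units.mk0 Complex.I I_ne_zero : ℂˣ) • K from rfl,
    spectrum.unit_smul_eq_smul] at hmem
  obtain ⟨z, hz, hzI⟩ := hmem
  have him : z.im = 0 := by rw [hK.mem_spectrum_eq_re hz]; simp
  apply_fun Complex.re at hzI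
  simp [Units.smul_def, Complex.mul_re, him] at hzI

/-- For `K` bounded self-adjoint and `R` bounded, with `W = (2+iK)(2-iK)⁻¹`,
`L = 2i(2-iK)⁻¹R` and Hudson–Parthasarathy coefficients `𝓛₁ = -L*W`, `𝓛₂ = L`,
`𝓛₃ = W - I`: the operator `2 + 𝓛₃ = I + W` is invertible and
`2𝓛₃(2+𝓛₃)⁻¹ = iK`, `2𝓛₁(2+𝓛₃)⁻¹ = iR*`, `2(2+𝓛₃)⁻¹𝓛₂ = iR`. -/
theorem hp_coefficients_symmetric_form {H : Type*} [NormedAddCommGroup H]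
    [InnerProductSpace ℂ H] [CompleteSpace H]
    (K R : H →L[ℂ] H) (hK : IsSelfAdjoint K) :
    let W : H →L[ℂ] H :=
      ((2 : H →L[ℂ] H) + Complex.I • K) * Ring.inverse ((2 : H →L[ℂ] H) - Complex.I • K)
    let L : H →L[ℂ] H := (2 * Complex.I) • (Ring.inverse ((2 : H →L[ℂ] H) - Complex.I • K) * R)
    let L1 : H →L[ℂ] H := -(ContinuousLinearMap.adjoint L * W)
    let L2 : H →L[ℂ] H := L
    let L3 : H →L[ℂ] H := W - 1
    IsUnit ((2 : H →L[ℂ] H) + L3) ∧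
    (2 : ℂ) • (L3 * Ring.inverse ((2 : H →L[ℂ] H) + L3)) = Complex.I • K ∧
    (2 : ℂ) • (L1 * Ring.inverse ((2 : H →L[ℂ] H) + L3)) =
      Complex.I • ContinuousLinearMap.adjoint R ∧
    (2 : ℂ) • (Ring.inverse ((2 : H →L[ℂ] H) + L3) * L2) = Complex.I • R := by
  intro W L L1 L2 L3
  set A : H →L[ℂ] H := (2 : H →L[ℂ] H) - Complex.I • K with hA_def
  set B : H →L[ℂ] H := (2 : H →L[ℂ] H) + Complex.I • K with hB_def
  have hA : IsUnit A := aux_isUnit K hK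
  obtain ⟨u, hu⟩ := hA
  have hAinv : Ring.inverse A = (↑u⁻¹ : H →L[ℂ] H) := by rw [← hu, Ring.inverse_unit]
  have hstarK : star K = K := hK
  have hstarA : star A = B := by
    simp [hA_def, hB_def, star_sub, star_smul, hstarK]
  have hstaru : star (↑u⁻¹ : H →L[ℂ] H) * B = 1 := by
    rw [← hstarA, ← hu, ← star_mul, u.mul_inv, star_one]
  have hW : W = B * ↑u⁻¹ := by rw [show W = B * Ring.inverse A from rfl, hAinv]
  have h2 : A * (↑u⁻¹ : H →L[ℂ] H) = 1 := by rw [← hu, u.mul_inv]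
  have hfour : A + B = ((4:ℂ) • (1 : H →L[ℂ] H)) := by
    have : ((4:ℂ) • (1 : H →L[ℂ] H)) = 4 := by
      rw [← Algebra.algebraMap_eq_smul_one, map_ofNat]
    rw [this, hA_def, hB_def]
    have h22 : (2:H →L[ℂ] H) + 2 = 4 := by norm_num
    rw [sub_add_add_cancel, h22]
  have key : (2 : H →L[ℂ] H) + L3 = (4:ℂ) • (↑u⁻¹ : H →L[ℂ] H) := by
    show (2 : H →L[ℂ] H) + (W - 1) = _
    rw [hW]
    calc (2 : H →L[ℂ] H) + (B * ↑u⁻¹ - 1)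
        = (1+1) + (B * ↑u⁻¹ - 1) := by norm_num
      _ = 1 + B * ↑u⁻¹ := by abel
      _ = A * ↑u⁻¹ + B * ↑u⁻¹ := by rw [h2]
      _ = (A + B) * ↑u⁻¹ := (add_mul A B _).symm
      _ = ((4:ℂ) • (1 : H →L[ℂ] H)) * ↑u⁻¹ := by rw [hfour]
      _ = (4:ℂ) • (↑u⁻¹ : H →L[ℂ] H) := by rw [smul_mul_assoc, one_mul]
  have hinv : Ring.inverse ((2 : H →L[ℂ] H) + L3) = (4⁻¹:ℂ) • (↑u : H →L[ℂ] H) := by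
    rw [key]
    have : (4:ℂ) • (↑u⁻¹ : H →L[ℂ] H) =
        ↑((Units.map (algebraMap ℂ (H →L[ℂ] H) : ℂ →* (H →L[ℂ] H))
          (Units.mk0 (4:ℂ) (by norm_num))) * u⁻¹) := by
      simp [Units.val_mul, Algebra.algebraMap_eq_smul_one, smul_mul_assoc]
    rw [this, Ring.inverse_unit]
    simp [Units.val_mul, Algebra.algebraMap_eq_smul_one, mul_smul_one, mul_smul_comm]
  refine ⟨?_, ?_, ?_, ?_⟩
  · rw [key]
    exact (IsUnit.smul (Units.mk0 (4:ℂ) (by norm_num)) u⁻¹.isUnit)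
  · rw [hinv]
    show (2:ℂ) • ((W - 1) * ((4⁻¹:ℂ) • (↑u : H →L[ℂ] H))) = Complex.I • K
    have hBA : B - A = (2*Complex.I) • K := by
      rw [hA_def, hB_def]; ext x; simp [two_smul, smul_smul, two_mul]; module
    rw [hW, show B * (↑u⁻¹:H →L[ℂ] H) - 1 = (B - A) * ↑u⁻¹ by rw [sub_mul, h2], hBA]
    simp only [smul_mul_assoc, mul_smul_comm, smul_smul, mul_assoc, u.inv_mul, mul_one]
    congr 1
    ring
  · rw [hinv]
    have hLstar : ContinuousLinearMap.adjoint L =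
        (-(2*Complex.I)) • (ContinuousLinearMap.adjoint R * star (↑u⁻¹ : H →L[ℂ] H)) := by
      rw [← ContinuousLinearMap.star_eq_adjoint, ← ContinuousLinearMap.star_eq_adjoint]
      show star ((2 * Complex.I) • (Ring.inverse A * R)) = _
      rw [hAinv, star_smul, star_mul (↑u⁻¹ : H →L[ℂ] H) R]
      congr 1
      simp [Complex.ext_iff]
    show (2:ℂ) • (-(ContinuousLinearMap.adjoint L * W) * ((4⁻¹:ℂ) • (↑u : H →L[ℂ] H))) = _
    rw [hLstar, hW]
    rw [smul_mul_assoc, mul_assoc, ← mul_assoc (star (↑u⁻¹ : H →L[ℂ] H)), hstaru, one_mul]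
    simp only [neg_smul, neg_mul, smul_neg, neg_neg, smul_mul_assoc, mul_smul_comm,
      smul_smul, mul_assoc, u.inv_mul, mul_one]
    congr 1
    ring
  · rw [hinv]
    show (2:ℂ) • (((4⁻¹:ℂ) • (↑u : H →L[ℂ] H)) * ((2 * Complex.I) • (Ring.inverse A * R))) = _
    rw [hAinv]
    simp only [smul_mul_assoc, mul_smul_comm, smul_smul, ← mul_assoc, u.mul_inv, one_mul]
    congr 1
    ring
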